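/- For any C̃ : X → ℝ in the robust set 𝒞 (i.e., α·log(∑ₓ Q(x)·exp((C̃(x)−C(x))/α)) ≤ ε) and any probability mass function P on X with support contained in the support of Q, we have ∑ₓ C̃(x)P(x) ≤ ∑ₓ C(x)P(x) + α·KL(P‖Q) + ε. -/

import Mathlib

open Real

theorem stmt_3 {X : Type*} [Fintype X]
    (P Q C Ct : X → ℝ) (α ε : ℝ) (hα : 0 < α)
    (hP0 : ∀ x, 0 ≤ P x) (hP1 : ∑ x, P x = 1)
    (hQ0 : ∀ x, 0 ≤ Q x) (hQ1 : ∑ x, Q x = 1)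
    (hsupp : ∀ x, 0 < P x → 0 < Q x)
    (hCt : α * Real.log (∑ x, Q x * Real.exp ((Ct x - C x) / α)) ≤ ε) :
    (∑ x, Ct x * P x) ≤
      (∑ x, C x * P x) +
        α * (∑ x ∈ Finset.univ.filter (fun x => 0 < P x),
              P x * Real.log (P x / Q x)) + ε := by
  set f : X → ℝ := fun x => (Ct x - C x) / α with hf
  set S : ℝ := ∑ x, Q x * Real.exp (f x) with hS
  set s : Finset X := Finset.univ.filter (fun x => 0 < P x) with hs
  have hQpos : ∃ x, 0 < Q x := by
    by_contra h
    push_neg at h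
    have h0 : ∀ x, Q x = 0 := fun x => le_antisymm (h x) (hQ0 x)
    simp [h0] at hQ1
  have hSpos : 0 < S := by
    obtain ⟨x0, hx0⟩ := hQpos
    apply Finset.sum_pos'
    · intro i _
      exact mul_nonneg (hQ0 i) (Real.exp_pos _).le
    · exact ⟨x0, Finset.mem_univ _, mul_pos hx0 (Real.exp_pos _)⟩
  have hPz : ∀ x, x ∉ s → P x = 0 := by
    intro x hx
    simp only [hs, Finset.mem_filter, Finset.mem_univ, true_and, not_lt] at hx
    exact le_antisymm hx (hP0 x)
  have hPs : ∑ x ∈ s, P x = 1 := by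
    rw [← hP1]
    exact Finset.sum_subset (Finset.filter_subset _ _)
      (fun x _ hx => hPz x hx)
  have hsub : ∑ x ∈ s, Q x * Real.exp (f x) ≤ S := by
    apply Finset.sum_le_sum_of_subset_of_nonneg (Finset.filter_subset _ _)
    intro i _ _
    exact mul_nonneg (hQ0 i) (Real.exp_pos _).le
  -- pointwise key inequality
  have key : ∀ x ∈ s, P x * f x ≤
      P x * Real.log (P x / Q x) + (P x * Real.log S + Q x * Real.exp (f x) / S - P x) := by
    intro x hx
    have hp : 0 < P x := (Finset.mem_filter.mp hx).2
    have hq : 0 < Q x := hsupp x hp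
    have ha : 0 < Q x * Real.exp (f x) := mul_pos hq (Real.exp_pos _)
    set a : ℝ := Q x * Real.exp (f x) with hadef
    have h1 : P x * f x - P x * Real.log (P x / Q x) = P x * Real.log (a / P x) := by
      rw [Real.log_div ha.ne' hp.ne', hadef, Real.log_mul hq.ne' (Real.exp_pos _).ne',
        Real.log_exp, Real.log_div hp.ne' hq.ne']
      ring
    have h2 : Real.log (a / P x) ≤ a / (S * P x) - 1 + Real.log S := by
      have : a / P x = (a / (S * P x)) * S := by
        field_simp
      rw [this, Real.log_mul (by positivity) hSpos.ne']
      have := Real.log_le_sub_one_of_pos (show 0 < a / (S * P x) by positivity)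
      linarith
    have h3 : P x * Real.log (a / P x) ≤ P x * Real.log S + a / S - P x := by
      have := mul_le_mul_of_nonneg_left h2 hp.le
      have heq : P x * (a / (S * P x)) = a / S := by
        field_simp
      nlinarith [this, heq]
    linarith
  have hsum : ∑ x ∈ s, P x * f x ≤
      (∑ x ∈ s, P x * Real.log (P x / Q x)) + Real.log S := by
    have := Finset.sum_le_sum key
    rw [Finset.sum_add_distrib] at this
    have h4 : ∑ x ∈ s, (P x * Real.log S + Q x * Real.exp (f x) / S - P x)
        = (∑ x ∈ s, P x) * Real.log S + (∑ x ∈ s, Q x * Real.exp (f x)) / S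
          - (∑ x ∈ s, P x) := by
      rw [Finset.sum_sub_distrib, Finset.sum_add_distrib, ← Finset.sum_mul,
        ← Finset.sum_div]
    rw [h4, hPs] at this
    have h5 : (∑ x ∈ s, Q x * Real.exp (f x)) / S ≤ 1 :=
      (div_le_one hSpos).mpr hsub
    linarith
  have hlog : α * Real.log S ≤ ε := hCt
  -- translate back
  have hdiff : ∑ x, Ct x * P x - ∑ x, C x * P x = α * ∑ x ∈ s, P x * f x := by
    rw [← Finset.sum_sub_distrib, Finset.mul_sum]
    rw [show ∑ x, (Ct x * P x - C x * P x) = ∑ x ∈ s, (Ct x * P x - C x * P x) from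
      (Finset.sum_subset (Finset.filter_subset _ _)
        (fun x _ hx => by rw [hPz x hx]; ring)).symm]
    apply Finset.sum_congr rfl
    intro x _
    simp only [hf]
    field_simp
  have := mul_le_mul_of_nonneg_left hsum hα.le
  rw [mul_add] at this
  linarith
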